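/- Let ρ be a measure on (0,∞) satisfying ∫_0^∞ min(1, r) dρ(r) < ∞. Then for every real φ ≥ 0, the quantity ∫_0^∞ (1 − e^{−(1 − e^{−φ})r}) dρ(r) is finite and equals ∑_{j=1}^∞ (1 − e^{−φ·j}) · ∫_0^∞ (r^j e^{−r}/j!) dρ(r), where every integral on the right is finite and the series converges. -/

import Mathlib

open MeasureTheory Real

lemma hasSum_exp_real (x : ℝ) : HasSum (fun n : ℕ => x ^ n / n.factorial) (Real.exp x) := by
  rw [Real.exp_eq_exp_ℝ]
  exact NormedSpace.expSeries_div_hasSum_exp x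

lemma key_hasSum (φ r : ℝ) :
    HasSum (fun j : ℕ => (1 - Real.exp (-(φ * (j + 1)))) *
        (r ^ (j + 1) * Real.exp (-r) / (Nat.factorial (j + 1))))
      (1 - Real.exp (-((1 - Real.exp (-φ)) * r))) := by
  have h1 : HasSum (fun j : ℕ => r ^ j / j.factorial * Real.exp (-r)) 1 := by
    have := (hasSum_exp_real r).mul_right (Real.exp (-r))
    rwa [← Real.exp_add, add_neg_cancel, Real.exp_zero] at this
  have h2 : HasSum (fun j : ℕ => (r * Real.exp (-φ)) ^ j / j.factorial * Real.exp (-r))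
      (Real.exp (-((1 - Real.exp (-φ)) * r))) := by
    have := (hasSum_exp_real (r * Real.exp (-φ))).mul_right (Real.exp (-r))
    rwa [← Real.exp_add, show r * Real.exp (-φ) + -r = -((1 - Real.exp (-φ)) * r) by ring]
      at this
  have h3 := h1.sub h2
  have h0 : (fun j : ℕ => r ^ j / j.factorial * Real.exp (-r)
      - (r * Real.exp (-φ)) ^ j / j.factorial * Real.exp (-r)) 0 = 0 := by simp
  have h4 := (hasSum_nat_add_iff' 1).mpr h3
  simp only [Finset.range_one, Finset.sum_singleton, h0, sub_zero] at h4
  convert h4 using 2 with j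
  · rfl
  rw [mul_pow, ← Real.exp_nat_mul]
  push_cast
  ring_nf

lemma term_nonneg (j : ℕ) {r : ℝ} (hr : 0 ≤ r) :
    0 ≤ r ^ (j + 1) * Real.exp (-r) / (Nat.factorial (j + 1)) := by positivity

lemma term_le_min (j : ℕ) {r : ℝ} (hr : 0 ≤ r) :
    r ^ (j + 1) * Real.exp (-r) / (Nat.factorial (j + 1)) ≤ min 1 r := by
  have h1 : HasSum (fun j : ℕ => r ^ j / j.factorial * Real.exp (-r)) 1 := by
    have := (hasSum_exp_real r).mul_right (Real.exp (-r))
    rwa [← Real.exp_add, add_neg_cancel, Real.exp_zero] at this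
  have hnn : ∀ i : ℕ, 0 ≤ r ^ i / i.factorial * Real.exp (-r) := fun i => by positivity
  have heq : r ^ (j + 1) * Real.exp (-r) / (Nat.factorial (j + 1)) =
      r ^ (j + 1) / (Nat.factorial (j + 1)) * Real.exp (-r) := by ring
  rw [heq]
  refine le_min ?_ ?_
  · exact le_hasSum h1 (j + 1) fun i _ => hnn i
  · have hsum := sum_le_hasSum ({0, j + 1} : Finset ℕ) (fun i _ => hnn i) h1
    rw [Finset.sum_pair (by omega)] at hsum
    simp only [pow_zero, Nat.factorial_zero, Nat.cast_one] at hsum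
    have h5 : 1 - Real.exp (-r) ≤ r := by
      have := Real.add_one_le_exp (-r); linarith
    have h6 : 1 / 1 * Real.exp (-r) = Real.exp (-r) := by ring
    rw [h6] at hsum
    linarith
lemma main_le_min {φ r : ℝ} (hφ : 0 ≤ φ) (hr : 0 ≤ r) :
    1 - Real.exp (-((1 - Real.exp (-φ)) * r)) ≤ min 1 r := by
  have hc0 : 0 ≤ 1 - Real.exp (-φ) := by
    have := Real.exp_le_one_iff.mpr (neg_nonpos.mpr hφ); linarith
  have hc1 : 1 - Real.exp (-φ) ≤ 1 := by
    have := Real.exp_pos (-φ); linarith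
  refine le_min ?_ ?_
  · have := Real.exp_pos (-((1 - Real.exp (-φ)) * r)); linarith
  · have h5 : 1 - Real.exp (-((1 - Real.exp (-φ)) * r)) ≤ (1 - Real.exp (-φ)) * r := by
      have := Real.add_one_le_exp (-((1 - Real.exp (-φ)) * r)); linarith
    have : (1 - Real.exp (-φ)) * r ≤ 1 * r := mul_le_mul_of_nonneg_right hc1 hr
    linarith

theorem mixedPoisson_levy_measure (ρ : Measure ℝ)
    (hρ : ∫⁻ r in Set.Ioi (0 : ℝ), ENNReal.ofReal (min 1 r) ∂ρ ≠ ⊤)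
    (φ : ℝ) (hφ : 0 ≤ φ) :
    (∫⁻ r in Set.Ioi (0 : ℝ),
        ENNReal.ofReal (1 - Real.exp (-((1 - Real.exp (-φ)) * r))) ∂ρ ≠ ⊤) ∧
    (∀ j : ℕ,
      ∫⁻ r in Set.Ioi (0 : ℝ),
        ENNReal.ofReal (r ^ (j + 1) * Real.exp (-r) / (Nat.factorial (j + 1))) ∂ρ ≠ ⊤) ∧
    (∫⁻ r in Set.Ioi (0 : ℝ),
        ENNReal.ofReal (1 - Real.exp (-((1 - Real.exp (-φ)) * r))) ∂ρ =
      ∑' j : ℕ, ENNReal.ofReal (1 - Real.exp (-(φ * (j + 1)))) *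
        ∫⁻ r in Set.Ioi (0 : ℝ),
          ENNReal.ofReal (r ^ (j + 1) * Real.exp (-r) / (Nat.factorial (j + 1))) ∂ρ) := by
  have hmin : Measurable fun r : ℝ => ENNReal.ofReal (min 1 r) :=
    ENNReal.measurable_ofReal.comp ((continuous_const.min continuous_id).measurable)
  refine ⟨?_, ?_, ?_⟩
  · refine ne_top_of_le_ne_top hρ (setLIntegral_mono hmin fun r hr => ?_)
    exact ENNReal.ofReal_le_ofReal (main_le_min hφ (le_of_lt hr))
  · intro j
    refine ne_top_of_le_ne_top hρ (setLIntegral_mono hmin fun r hr => ?_)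
    exact ENNReal.ofReal_le_ofReal (term_le_min j (le_of_lt hr))
  · have hpt : ∀ r ∈ Set.Ioi (0 : ℝ),
        ENNReal.ofReal (1 - Real.exp (-((1 - Real.exp (-φ)) * r))) =
        ∑' j : ℕ, ENNReal.ofReal (1 - Real.exp (-(φ * (j + 1)))) *
          ENNReal.ofReal (r ^ (j + 1) * Real.exp (-r) / (Nat.factorial (j + 1))) := by
      intro r hr
      have hr0 : (0 : ℝ) ≤ r := le_of_lt hr
      have hs := key_hasSum φ r
      have hcn : ∀ j : ℕ, 0 ≤ 1 - Real.exp (-(φ * (j + 1))) := by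
        intro j
        have : Real.exp (-(φ * (j + 1))) ≤ 1 :=
          Real.exp_le_one_iff.mpr (neg_nonpos.mpr (by positivity))
        linarith
      rw [← hs.tsum_eq, ENNReal.ofReal_tsum_of_nonneg
        (fun j => mul_nonneg (hcn j) (term_nonneg j hr0)) hs.summable]
      exact tsum_congr fun j => ENNReal.ofReal_mul (hcn j)
    rw [setLIntegral_congr_fun measurableSet_Ioi hpt]
    have hm : ∀ j : ℕ, Measurable fun r : ℝ =>
        ENNReal.ofReal (1 - Real.exp (-(φ * (j + 1)))) *
          ENNReal.ofReal (r ^ (j + 1) * Real.exp (-r) / (Nat.factorial (j + 1))) := by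
      intro j
      exact (ENNReal.measurable_ofReal.comp
        (((continuous_pow (j + 1)).mul (Real.continuous_exp.comp continuous_neg)).div_const
          _).measurable).const_mul _
    rw [lintegral_tsum (fun j => (hm j).aemeasurable)]
    exact tsum_congr fun j => lintegral_const_mul' _ _ ENNReal.ofReal_ne_top
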